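/- Assume ‖φ_j‖₂ = 1 for all j ∈ [n], let P be an orthogonal projection of ℝ^m, and let g be distributed according to the standard Gaussian measure on ℝ^K. Then 𝔼[f_{j_c^{(P)}}^{(P)}(g)] − max_{j∉S} 𝔼[f_j^{(P)}(g)] ≥ (γ_c^{(P)} − γ_i^{(P)}) − √(2/π) ‖σ‖₁, where γ_c^{(P)} := max_{j∈S} Σ_{k=1}^K β_{j,k}^{(P)} and γ_i^{(P)} := max_{j∉S} Σ_{k=1}^K β_{j,k}^{(P)}. -/

import Mathlib

open Finset MeasureTheory ProbabilityTheory

open Real Set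
open scoped NNReal ENNReal Matrix

namespace Stmt11Aux


lemma pdf_eq (x : ℝ) :
    gaussianPDFReal 0 1 x = (Real.sqrt (2 * Real.pi))⁻¹ * Real.exp (-(1/2) * x ^ 2) := by
  simp only [gaussianPDFReal, NNReal.coe_one, mul_one, sub_zero]
  congr 1
  ring_nf

lemma integral_gauss (g : ℝ → ℝ) :
    ∫ x, g x ∂(gaussianReal 0 1) = ∫ x, gaussianPDFReal 0 1 x * g x := by
  rw [gaussianReal_of_var_ne_zero 0 one_ne_zero]
  have h : gaussianPDF 0 1 = fun x => ((Real.toNNReal (gaussianPDFReal 0 1 x) : ℝ≥0) : ℝ≥0∞) := by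
    funext x
    simp [gaussianPDF, ENNReal.ofReal]
  rw [h, integral_withDensity_eq_integral_smul ((measurable_gaussianPDFReal 0 1).real_toNNReal)]
  congr 1
  funext x
  simp [NNReal.smul_def, Real.coe_toNNReal _ (gaussianPDFReal_nonneg 0 1 x)]

lemma integrable_gauss_iff (g : ℝ → ℝ) :
    Integrable g (gaussianReal 0 1) ↔
      Integrable (fun x => gaussianPDFReal 0 1 x * g x) volume := by
  rw [gaussianReal_of_var_ne_zero 0 one_ne_zero]
  have h : gaussianPDF 0 1 = fun x => ((Real.toNNReal (gaussianPDFReal 0 1 x) : ℝ≥0) : ℝ≥0∞) := by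
    funext x
    simp [gaussianPDF, ENNReal.ofReal]
  rw [h, integrable_withDensity_iff_integrable_smul ((measurable_gaussianPDFReal 0 1).real_toNNReal)]
  constructor <;> intro hh <;> apply hh.congr <;> filter_upwards with x <;>
    simp [NNReal.smul_def, Real.coe_toNNReal _ (gaussianPDFReal_nonneg 0 1 x)]

lemma integrable_pdf_mul_majorant (a b : ℝ) :
    Integrable (fun x => gaussianPDFReal 0 1 x * (|a| + |b| * |x|)) volume := by
  have h1 : Integrable (fun x : ℝ => Real.exp (-(1/2) * x ^ 2)) volume :=
    integrable_exp_neg_mul_sq (by norm_num)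
  have h2 : Integrable (fun x : ℝ => x * Real.exp (-(1/2) * x ^ 2)) volume :=
    integrable_mul_exp_neg_mul_sq (by norm_num)
  have heq : (fun x => gaussianPDFReal 0 1 x * (|a| + |b| * |x|)) =
      fun x => |a| * ((Real.sqrt (2 * Real.pi))⁻¹ * Real.exp (-(1/2) * x ^ 2)) +
        |b| * ((Real.sqrt (2 * Real.pi))⁻¹ * |x * Real.exp (-(1/2) * x ^ 2)|) := by
    funext x
    rw [pdf_eq, abs_mul, abs_of_nonneg (Real.exp_pos _).le]
    ring
  rw [heq]
  exact ((h1.const_mul _).const_mul _).add ((h2.abs.const_mul _).const_mul _)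

lemma integrable_abs_affine (a b : ℝ) :
    Integrable (fun x => |a + b * x|) (gaussianReal 0 1) := by
  rw [integrable_gauss_iff]
  refine (integrable_pdf_mul_majorant a b).mono' ?_ ?_
  · exact ((measurable_gaussianPDFReal 0 1).mul
      ((measurable_const.add (measurable_id.const_mul b)).abs)).aestronglyMeasurable
  · filter_upwards with x
    have h0 : 0 ≤ gaussianPDFReal 0 1 x := gaussianPDFReal_nonneg 0 1 x
    rw [Real.norm_eq_abs, abs_mul, abs_of_nonneg h0, abs_abs]
    refine mul_le_mul_of_nonneg_left ?_ h0
    calc |a + b * x| ≤ |a| + |b * x| := abs_add_le _ _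
      _ = |a| + |b| * |x| := by rw [abs_mul]

lemma integrable_affine (a b : ℝ) :
    Integrable (fun x => a + b * x) (gaussianReal 0 1) := by
  refine (integrable_norm_iff ?_).mp ?_
  · exact (measurable_const.add (measurable_id.const_mul b)).aestronglyMeasurable
  · simpa [Real.norm_eq_abs] using integrable_abs_affine a b

lemma integral_id_gauss : ∫ x, x ∂(gaussianReal 0 1) = 0 := by
  rw [integral_gauss]
  have hodd : ∀ x : ℝ, gaussianPDFReal 0 1 (-x) * (-x) = -(gaussianPDFReal 0 1 x * x) := by
    intro x
    rw [pdf_eq, pdf_eq, neg_sq]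
    ring
  have h := integral_neg_eq_self (fun x : ℝ => gaussianPDFReal 0 1 x * x) volume
  simp only [hodd, integral_neg] at h
  linarith

lemma integral_Ioi_x_exp : ∫ x in Ioi (0:ℝ), x * Real.exp (-(1/2) * x ^ 2) = 1 := by
  have h := integral_mul_cexp_neg_mul_sq (b := (1/2 : ℂ)) (by norm_num)
  have heq : ∀ r : ℝ, (r : ℂ) * Complex.exp (-(1/2 : ℂ) * (r : ℂ) ^ 2) =
      ((r * Real.exp (-(1/2) * r ^ 2) : ℝ) : ℂ) := by
    intro r
    push_cast [Complex.ofReal_exp]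
    ring_nf
  rw [show (∫ r : ℝ in Ioi 0, (r : ℂ) * Complex.exp (-(1/2 : ℂ) * (r : ℂ) ^ 2))
      = ∫ r : ℝ in Ioi 0, ((r * Real.exp (-(1/2) * r ^ 2) : ℝ) : ℂ) from by
    exact integral_congr_ae (Filter.Eventually.of_forall fun r => heq r)] at h
  rw [show ((2:ℂ) * (1/2:ℂ))⁻¹ = (1:ℂ) from by norm_num] at h
  rw [← RCLike.ofReal_inj (K := ℂ), ← integral_ofReal]
  simpa using h


lemma integral_abs_gauss : ∫ x, |x| ∂(gaussianReal 0 1) = Real.sqrt (2 / Real.pi) := by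
  rw [integral_gauss]
  have heq : (fun x : ℝ => gaussianPDFReal 0 1 x * |x|) =
      fun x => gaussianPDFReal 0 1 |x| * |x| := by
    funext x
    rw [pdf_eq, pdf_eq, sq_abs]
  rw [heq, integral_comp_abs (f := fun y => gaussianPDFReal 0 1 y * y)]
  have : ∫ y in Ioi (0:ℝ), gaussianPDFReal 0 1 y * y =
      (Real.sqrt (2 * Real.pi))⁻¹ * ∫ y in Ioi (0:ℝ), y * Real.exp (-(1/2) * y ^ 2) := by
    rw [← integral_const_mul]
    refine setIntegral_congr_fun measurableSet_Ioi fun y _ => ?_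
    rw [pdf_eq]
    ring
  rw [this, integral_Ioi_x_exp, mul_one]
  rw [show (2 : ℝ) / Real.pi = 2 ^ 2 / (2 * Real.pi) from by
    rw [sq]
    field_simp]
  rw [Real.sqrt_div (by positivity), Real.sqrt_sq (by norm_num), div_eq_mul_inv]




lemma meas_absaff (a b : ℝ) :
    AEStronglyMeasurable (fun x : ℝ => |a + b * x|) (gaussianReal 0 1) :=
  ((continuous_const.add (continuous_const.mul continuous_id)).abs).aestronglyMeasurable

lemma integrable_abs_gauss : Integrable (fun x : ℝ => |x|) (gaussianReal 0 1) := by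
  simpa using integrable_abs_affine 0 1

lemma gauss_lower (a b : ℝ) : |a| ≤ ∫ x, |a + b * x| ∂(gaussianReal 0 1) := by
  have hbx : Integrable (fun x : ℝ => b * x) (gaussianReal 0 1) := by
    simpa using integrable_affine 0 b
  have h1 : ∫ x, (a + b * x) ∂(gaussianReal 0 1) = a := by
    rw [integral_add (integrable_const a) hbx, integral_const_mul, integral_id_gauss]
    simp
  calc |a| = |∫ x, (a + b * x) ∂(gaussianReal 0 1)| := by rw [h1]
    _ ≤ ∫ x, |a + b * x| ∂(gaussianReal 0 1) := by
        simpa [Real.norm_eq_abs] using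
          norm_integral_le_integral_norm (μ := gaussianReal 0 1) (fun x => a + b * x)

lemma gauss_upper (a b : ℝ) (hb : 0 ≤ b) :
    ∫ x, |a + b * x| ∂(gaussianReal 0 1) ≤ |a| + b * Real.sqrt (2 / Real.pi) := by
  have h2 : Integrable (fun x : ℝ => |a| + b * |x|) (gaussianReal 0 1) :=
    (integrable_const _).add (integrable_abs_gauss.const_mul b)
  have hmono : ∫ x, |a + b * x| ∂(gaussianReal 0 1) ≤
      ∫ x, (|a| + b * |x|) ∂(gaussianReal 0 1) := by
    refine integral_mono (integrable_abs_affine a b) h2 fun x => ?_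
    calc |a + b * x| ≤ |a| + |b * x| := abs_add_le _ _
      _ = |a| + b * |x| := by rw [abs_mul, abs_of_nonneg hb]
  refine hmono.trans_eq ?_
  rw [integral_add (integrable_const _) (integrable_abs_gauss.const_mul b), integral_const_mul,
    integral_abs_gauss]
  simp

lemma map_eval_pi {K : ℕ} (k : Fin K) :
    (Measure.pi fun _ : Fin K => gaussianReal 0 1).map (fun g => g k) = gaussianReal 0 1 := by
  ext s hs
  rw [Measure.map_apply (measurable_pi_apply k) hs]
  have hpre : (fun g : Fin K → ℝ => g k) ⁻¹' s =
      Set.pi Set.univ (Function.update (fun _ => Set.univ) k s) := Set.eval_preimage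
  rw [hpre, Measure.pi_pi]
  rw [Finset.prod_eq_single k (fun i _ hik => by simp [Function.update_of_ne hik]) (by simp)]
  simp

lemma integral_eval {K : ℕ} (k : Fin K) (h : ℝ → ℝ)
    (hm : AEStronglyMeasurable h (gaussianReal 0 1)) :
    ∫ g : Fin K → ℝ, h (g k) ∂(Measure.pi fun _ => gaussianReal 0 1) =
      ∫ x, h x ∂(gaussianReal 0 1) := by
  conv_rhs => rw [← map_eval_pi k]
  rw [integral_map (measurable_pi_apply k).aemeasurable (by rwa [map_eval_pi k])]

lemma integrable_eval {K : ℕ} (k : Fin K) (h : ℝ → ℝ)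
    (hm : AEStronglyMeasurable h (gaussianReal 0 1))
    (hi : Integrable h (gaussianReal 0 1)) :
    Integrable (fun g : Fin K → ℝ => h (g k)) (Measure.pi fun _ => gaussianReal 0 1) := by
  have := (integrable_map_measure (by rwa [map_eval_pi k])
    (measurable_pi_apply k).aemeasurable).mp (by rwa [map_eval_pi k])
  exact this



lemma sqrt_bound {m : ℕ} (P : Matrix (Fin m) (Fin m) ℝ) (hPsymm : P.IsSymm) (hPidem : P * P = P)
    (v : Fin m → ℝ) (hv : ∑ i, v i ^ 2 = 1) :
    Real.sqrt (∑ i, ((1 - P).mulVec v) i ^ 2) ≤ 1 := by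
  set Q : Matrix (Fin m) (Fin m) ℝ := 1 - P with hQ
  have hQsymm : Qᵀ = Q := by
    rw [hQ, Matrix.transpose_sub, Matrix.transpose_one, hPsymm]
  have hQP : Q * P = 0 := by
    rw [hQ, Matrix.sub_mul, Matrix.one_mul, hPidem, sub_self]
  have key : ∀ w, Q.mulVec v ⬝ᵥ w = v ⬝ᵥ Q.mulVec w := by
    intro w
    rw [Matrix.dotProduct_mulVec v Q w, ← Matrix.mulVec_transpose, hQsymm]
  have hcross : Q.mulVec v ⬝ᵥ P.mulVec v = 0 := by
    rw [key (P.mulVec v), Matrix.mulVec_mulVec, hQP, Matrix.zero_mulVec,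
      dotProduct_zero]
  have hsplit : v = Q.mulVec v + P.mulVec v := by
    rw [← Matrix.add_mulVec, hQ, sub_add_cancel, Matrix.one_mulVec]
  have hsum : v ⬝ᵥ v = Q.mulVec v ⬝ᵥ Q.mulVec v + P.mulVec v ⬝ᵥ P.mulVec v := by
    conv_lhs => rw [hsplit]
    rw [add_dotProduct, dotProduct_add, dotProduct_add,
      hcross, dotProduct_comm (P.mulVec v) (Q.mulVec v), hcross]
    ring
  have hvv : v ⬝ᵥ v = 1 := by
    rw [← hv]
    simp [dotProduct, pow_two]
  have hPnn : 0 ≤ P.mulVec v ⬝ᵥ P.mulVec v :=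
    Finset.sum_nonneg fun i _ => mul_self_nonneg _
  have hQle : Q.mulVec v ⬝ᵥ Q.mulVec v ≤ 1 := by
    rw [hvv] at hsum
    linarith
  have heq : ∑ i, (Q.mulVec v) i ^ 2 = Q.mulVec v ⬝ᵥ Q.mulVec v := by
    simp [dotProduct, pow_two]
  exact Real.sqrt_le_one.mpr (by rw [heq]; exact hQle)


end Stmt11Aux

open Stmt11Aux

/-- SOMP setting: atoms `φ_j` (columns of `Φ`) with unit `ℓ₂` norm,
joint support `S` of `X`, noise standard deviations `σ`, `P` an orthogonal projection
matrix of `ℝ^m`, `β j k = |⟪φ_j, (I-P)Φx_k⟫|`, `σP j k = ‖(I-P)φ_j‖₂ σ_k`,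
`f j g = ∑ k, |β j k + σP j k * g k|`, and `jc` the argmax over `S` of `∑ k, β j k`.
With `g` standard Gaussian on `ℝ^K`,
`𝔼[f jc g] - max_{j ∉ S} 𝔼[f j g] ≥ (γc - γi) - √(2/π) ‖σ‖₁`, where
`γc = max_{j ∈ S} ∑ k, β j k` and `γi = max_{j ∉ S} ∑ k, β j k`. -/
theorem stmt11 {m n K : ℕ} (Φ : Matrix (Fin m) (Fin n) ℝ)
    (X : Matrix (Fin n) (Fin K) ℝ)
    (S : Finset (Fin n)) (hS : ∀ j, j ∈ S ↔ ∃ k, X j k ≠ 0)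
    (hSne : S.Nonempty) (hScne : Sᶜ.Nonempty)
    (σ : Fin K → ℝ) (hσ : ∀ k, 0 ≤ σ k)
    (hunit : ∀ j, ∑ i, Φ i j ^ 2 = 1)
    (P : Matrix (Fin m) (Fin m) ℝ) (hPsymm : P.IsSymm) (hPidem : P * P = P)
    (R : Matrix (Fin m) (Fin K) ℝ) (hR : R = (1 - P) * Φ * X)
    (β : Fin n → Fin K → ℝ) (hβ : ∀ j k, β j k = |∑ i, Φ i j * R i k|)
    (σP : Fin n → Fin K → ℝ)
    (hσP : ∀ j k, σP j k =
      Real.sqrt (∑ i, ((1 - P).mulVec fun i' => Φ i' j) i ^ 2) * σ k)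
    (f : Fin n → (Fin K → ℝ) → ℝ)
    (hf : ∀ j g, f j g = ∑ k, |β j k + σP j k * g k|)
    (jc : Fin n) (hjc : jc ∈ S) (hjcmax : ∀ j ∈ S, (∑ k, β j k) ≤ ∑ k, β jc k)
    (γc γi : ℝ)
    (hγc : γc = S.sup' hSne fun j => ∑ k, β j k)
    (hγi : γi = Sᶜ.sup' hScne fun j => ∑ k, β j k) :
    (γc - γi) - Real.sqrt (2 / Real.pi) * (∑ k, σ k) ≤
      (∫ g, f jc g ∂(Measure.pi fun _ : Fin K => gaussianReal 0 1)) -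
        Sᶜ.sup' hScne fun j => ∫ g, f j g ∂(Measure.pi fun _ : Fin K => gaussianReal 0 1) := by
  have hβnn : ∀ j k, 0 ≤ β j k := fun j k => (hβ j k) ▸ abs_nonneg _
  have hσPnn : ∀ j k, 0 ≤ σP j k := fun j k =>
    (hσP j k) ▸ mul_nonneg (Real.sqrt_nonneg _) (hσ k)
  have hσPle : ∀ j k, σP j k ≤ σ k := by
    intro j k
    rw [hσP]
    calc Real.sqrt (∑ i, ((1 - P).mulVec fun i' => Φ i' j) i ^ 2) * σ k
        ≤ 1 * σ k := mul_le_mul_of_nonneg_right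
          (sqrt_bound P hPsymm hPidem _ (hunit j)) (hσ k)
      _ = σ k := one_mul _
  -- integral of f j over the product measure
  have hint : ∀ j, ∫ g, f j g ∂(Measure.pi fun _ : Fin K => gaussianReal 0 1) =
      ∑ k, ∫ x, |β j k + σP j k * x| ∂(gaussianReal 0 1) := by
    intro j
    simp only [hf]
    rw [integral_finset_sum univ (fun k _ =>
      integrable_eval k _ (meas_absaff _ _) (integrable_abs_affine _ _))]
    exact Finset.sum_congr rfl fun k _ => integral_eval k _ (meas_absaff _ _)
  have hlow : (∑ k, β jc k) ≤ ∫ g, f jc g ∂(Measure.pi fun _ : Fin K => gaussianReal 0 1) := by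
    rw [hint jc]
    refine Finset.sum_le_sum fun k _ => ?_
    have h := gauss_lower (β jc k) (σP jc k)
    rwa [abs_of_nonneg (hβnn jc k)] at h
  have hup : ∀ j, (∫ g, f j g ∂(Measure.pi fun _ : Fin K => gaussianReal 0 1)) ≤
      (∑ k, β j k) + Real.sqrt (2 / Real.pi) * (∑ k, σ k) := by
    intro j
    rw [hint j]
    calc ∑ k, ∫ x, |β j k + σP j k * x| ∂(gaussianReal 0 1)
        ≤ ∑ k, (β j k + σ k * Real.sqrt (2 / Real.pi)) := by
          refine Finset.sum_le_sum fun k _ => ?_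
          have h := gauss_upper (β j k) (σP j k) (hσPnn j k)
          rw [abs_of_nonneg (hβnn j k)] at h
          exact h.trans (add_le_add_right
            (mul_le_mul_of_nonneg_right (hσPle j k) (Real.sqrt_nonneg _)) _)
      _ = (∑ k, β j k) + Real.sqrt (2 / Real.pi) * (∑ k, σ k) := by
          rw [Finset.sum_add_distrib, ← Finset.sum_mul, mul_comm]
  have hγc' : γc = ∑ k, β jc k := by
    rw [hγc]
    exact le_antisymm (Finset.sup'_le _ _ hjcmax) (Finset.le_sup' (fun j => ∑ k, β j k) hjc)
  have hsup : (Sᶜ.sup' hScne fun j =>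
      ∫ g, f j g ∂(Measure.pi fun _ : Fin K => gaussianReal 0 1)) ≤
      γi + Real.sqrt (2 / Real.pi) * (∑ k, σ k) := by
    refine Finset.sup'_le _ _ fun j hj => (hup j).trans (add_le_add_left ?_ _)
    rw [hγi]
    exact Finset.le_sup' (fun j => ∑ k, β j k) hj
  have := hγc' ▸ hlow
  linarith
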